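/- Let A be an n×n symmetric integer matrix of the block form A = [[a, ξᵀ],[ξ, D + h·ξξᵀ]] where a ∈ ℤ, ξ = (c₁,…,c_{n−1})ᵀ ∈ ℤ^{n−1} with c₁ ≠ 0, h ∈ ℚ, and D = diag(d₁,…,d_{n−1}) with dᵢ ∈ ℚ. If rank(A) ≥ 6, then there exist five pairwise distinct indices b₁,…,b₅ ∈ {1,…,n−1} with c_{b₁}·d_{b₂}·d_{b₃}·d_{b₄}·d_{b₅} ≠ 0. -/
import Mathlib


open Matrix

private lemma rank_le_five_of_factor {n : ℕ} (Q : Matrix (Fin n) (Fin n) ℚ)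
    (B : Matrix (Fin n) (Fin 5) ℚ) (C : Matrix (Fin 5) (Fin n) ℚ) (hQ : Q = B * C) :
    Q.rank ≤ 5 := by
  rw [hQ]
  exact (Matrix.rank_mul_le_right _ _).trans ((Matrix.rank_le_card_height _).trans (by simp))

/-- Lemma 4.2: if A = [[a, ξᵀ],[ξ, D + h ξ ξᵀ]] is symmetric with ξ = (c₁,…,c_{n-1}),
c₁ ≠ 0, and rank(A) ≥ 6, then there are five pairwise distinct indices b₁,…,b₅ with
c_{b₁} d_{b₂} d_{b₃} d_{b₄} d_{b₅} ≠ 0. -/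
theorem stmt_4 (m : ℕ) (hm : 0 < m) (A : Matrix (Fin (m + 1)) (Fin (m + 1)) ℤ)
    (hsym : A.IsSymm)
    (a : ℤ) (c : Fin m → ℤ) (h : ℚ) (d : Fin m → ℚ)
    (hc1 : c ⟨0, hm⟩ ≠ 0)
    (h00 : A 0 0 = a)
    (hrow : ∀ i : Fin m, A 0 i.succ = c i)
    (hblk : ∀ i j : Fin m, (A i.succ j.succ : ℚ)
        = (if i = j then d i else 0) + h * (c i : ℚ) * (c j : ℚ))
    (hrank : 6 ≤ (A.map ((↑) : ℤ → ℚ)).rank) :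
    ∃ b : Fin 5 → Fin m, Function.Injective b ∧
      (c (b 0) : ℚ) * d (b 1) * d (b 2) * d (b 3) * d (b 4) ≠ 0 := by
  classical
  set Q : Matrix (Fin (m + 1)) (Fin (m + 1)) ℚ := A.map ((↑) : ℤ → ℚ) with hQdef
  have hQ00 : Q 0 0 = (a : ℚ) := by simp [hQdef, Matrix.map_apply, h00]
  have hQrow : ∀ i : Fin m, Q 0 i.succ = (c i : ℚ) := fun i => by
    simp [hQdef, Matrix.map_apply, hrow i]
  have hQcol : ∀ i : Fin m, Q i.succ 0 = (c i : ℚ) := fun i => by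
    simp [hQdef, Matrix.map_apply, hsym.apply 0 i.succ, hrow i]
  have hQblk : ∀ i j : Fin m, Q i.succ j.succ
      = (if i = j then d i else 0) + h * (c i : ℚ) * (c j : ℚ) := fun i j => by
    simpa [hQdef, Matrix.map_apply] using hblk i j
  -- m is at least 5
  have hm5 : 5 ≤ m := by
    have := (Matrix.rank_le_card_height Q).trans (by simp : Fintype.card (Fin (m+1)) ≤ m + 1)
    omega
  set S : Finset (Fin m) := Finset.univ.filter (fun i => d i ≠ 0) with hSdef
  have hmemS : ∀ i, i ∈ S ↔ d i ≠ 0 := fun i => by simp [hSdef]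
  by_cases h5 : 5 ≤ S.card
  · -- at least five nonzero d's
    set i0 : Fin m := ⟨0, hm⟩ with hi0
    have herase : 4 ≤ (S.erase i0).card := by
      have := Finset.pred_card_le_card_erase (a := i0) (s := S)
      omega
    obtain ⟨T, hTsub, hTcard⟩ := Finset.exists_subset_card_eq herase
    set g : Fin 4 → Fin m := fun k => ((T.orderIsoOfFin hTcard) k : Fin m) with hg
    have hginj : Function.Injective g := fun x y hxy =>
      (T.orderIsoOfFin hTcard).injective (Subtype.ext hxy)
    have hgmem : ∀ k, g k ∈ S.erase i0 := fun k => hTsub ((T.orderIsoOfFin hTcard) k).2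
    have hgne : ∀ k, g k ≠ i0 := fun k => (Finset.mem_erase.mp (hgmem k)).1
    have hgd : ∀ k, d (g k) ≠ 0 := fun k =>
      (hmemS _).mp (Finset.mem_erase.mp (hgmem k)).2
    refine ⟨Fin.cons i0 g, ?_, ?_⟩
    · refine Fin.cons_injective_of_injective ?_ hginj
      rintro ⟨k, hk⟩
      exact hgne k hk
    · have h0 : (Fin.cons i0 g : Fin 5 → Fin m) 0 = i0 := rfl
      have h1 : (Fin.cons i0 g : Fin 5 → Fin m) 1 = g 0 := rfl
      have h2 : (Fin.cons i0 g : Fin 5 → Fin m) 2 = g 1 := rfl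
      have h3 : (Fin.cons i0 g : Fin 5 → Fin m) 3 = g 2 := rfl
      have h4 : (Fin.cons i0 g : Fin 5 → Fin m) 4 = g 3 := rfl
      rw [h0, h1, h2, h3, h4]
      have : (c i0 : ℚ) ≠ 0 := by exact_mod_cast hc1
      exact mul_ne_zero (mul_ne_zero (mul_ne_zero (mul_ne_zero this (hgd 0)) (hgd 1)) (hgd 2)) (hgd 3)
  · push_neg at h5
    by_cases h4 : S.card = 4
    · -- exactly four nonzero d's
      set g : Fin 4 → Fin m := fun k => ((S.orderIsoOfFin h4) k : Fin m) with hg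
      have hginj : Function.Injective g := fun x y hxy =>
        (S.orderIsoOfFin h4).injective (Subtype.ext hxy)
      have hgmem : ∀ k, g k ∈ S := fun k => ((S.orderIsoOfFin h4) k).2
      have hgd : ∀ k, d (g k) ≠ 0 := fun k => (hmemS _).mp (hgmem k)
      have hgsurj : ∀ i, i ∈ S → ∃ k, g k = i := fun i hi => by
        obtain ⟨k, hk⟩ := (S.orderIsoOfFin h4).surjective ⟨i, hi⟩
        exact ⟨k, congrArg Subtype.val hk⟩
      by_cases hex : ∃ j, d j = 0 ∧ (c j : ℚ) ≠ 0
      · obtain ⟨j, hdj, hcj⟩ := hex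
        have hjS : j ∉ S := fun hj => (hmemS j).mp hj hdj
        refine ⟨Fin.cons j g, ?_, ?_⟩
        · refine Fin.cons_injective_of_injective ?_ hginj
          rintro ⟨k, hk⟩
          exact hjS (hk ▸ hgmem k)
        · have h0 : (Fin.cons j g : Fin 5 → Fin m) 0 = j := rfl
          have h1 : (Fin.cons j g : Fin 5 → Fin m) 1 = g 0 := rfl
          have h2 : (Fin.cons j g : Fin 5 → Fin m) 2 = g 1 := rfl
          have h3 : (Fin.cons j g : Fin 5 → Fin m) 3 = g 2 := rfl
          have h4' : (Fin.cons j g : Fin 5 → Fin m) 4 = g 3 := rfl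
          rw [h0, h1, h2, h3, h4']
          exact mul_ne_zero (mul_ne_zero (mul_ne_zero (mul_ne_zero hcj (hgd 0)) (hgd 1)) (hgd 2)) (hgd 3)
      · -- bad case 2: c vanishes off S, rank ≤ 5, contradiction
        exfalso
        push_neg at hex
        have hcS : ∀ j : Fin m, d j = 0 → (c j : ℚ) = 0 := hex
        -- rows of the factorization
        set r0 : Fin (m+1) → ℚ := Fin.cases 1 (fun _ => 0) with hr0
        set rE : Fin m → Fin (m+1) → ℚ :=
          fun i => Fin.cases 0 (fun j => if i = j then 1 else 0) with hrE
        set C : Matrix (Fin 5) (Fin (m+1)) ℚ :=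
          Matrix.of ![r0, rE (g 0), rE (g 1), rE (g 2), rE (g 3)] with hC
        set B : Matrix (Fin (m+1)) (Fin 5) ℚ :=
          Matrix.of (Fin.cases
            ![(a : ℚ), (c (g 0) : ℚ), (c (g 1) : ℚ), (c (g 2) : ℚ), (c (g 3) : ℚ)]
            (fun i => ![(c i : ℚ),
              (if g 0 = i then d i else 0) + h * (c i : ℚ) * (c (g 0) : ℚ),
              (if g 1 = i then d i else 0) + h * (c i : ℚ) * (c (g 1) : ℚ),
              (if g 2 = i then d i else 0) + h * (c i : ℚ) * (c (g 2) : ℚ),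
              (if g 3 = i then d i else 0) + h * (c i : ℚ) * (c (g 3) : ℚ)])) with hB
        have hfac : Q = B * C := by
          ext i j
          rw [Matrix.mul_apply, Fin.sum_univ_five]
          induction i using Fin.cases with
          | zero =>
            induction j using Fin.cases with
            | zero =>
              simp [hB, hC, hr0, hrE, Matrix.vecHead, Matrix.vecTail, hQ00]
            | succ j =>
              rw [hQrow j]
              by_cases hdj : d j = 0
              · have hgj : ∀ k : Fin 4, ¬ (g k = j) := fun k e => (hgd k) (by rw [e]; exact hdj)
                simp [hB, hC, hr0, hrE, Matrix.vecHead, Matrix.vecTail, hcS j hdj, hgj 0, hgj 1, hgj 2, hgj 3]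
              · obtain ⟨k, hk⟩ := hgsurj j ((hmemS j).mpr hdj)
                have huniq : ∀ k' : Fin 4, g k' = j ↔ k' = k := fun k' =>
                  ⟨fun e => hginj (e.trans hk.symm), fun e => e ▸ hk⟩
                fin_cases k <;>
                  · simp only [Fin.zero_eta, Fin.reduceFinMk] at huniq hk
                    simp [hB, hC, hr0, hrE, Matrix.vecHead, Matrix.vecTail, huniq, hk]
          | succ i =>
            induction j using Fin.cases with
            | zero =>
              rw [hQcol i]
              simp [hB, hC, hr0, hrE, Matrix.vecHead, Matrix.vecTail]
            | succ j =>
              rw [hQblk i j]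
              by_cases hdj : d j = 0
              · have hgj : ∀ k : Fin 4, ¬ (g k = j) := fun k e => (hgd k) (by rw [e]; exact hdj)
                by_cases hij : i = j
                · subst hij
                  simp [hB, hC, hr0, hrE, Matrix.vecHead, Matrix.vecTail, hcS i hdj, hdj, hgj 0, hgj 1, hgj 2, hgj 3]
                · simp [hB, hC, hr0, hrE, Matrix.vecHead, Matrix.vecTail, hcS j hdj, hij, hgj 0, hgj 1, hgj 2, hgj 3]
              · obtain ⟨k, hk⟩ := hgsurj j ((hmemS j).mpr hdj)
                have huniq : ∀ k' : Fin 4, g k' = j ↔ k' = k := fun k' =>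
                  ⟨fun e => hginj (e.trans hk.symm), fun e => e ▸ hk⟩
                fin_cases k <;>
                  · simp only [Fin.zero_eta, Fin.reduceFinMk] at huniq hk
                    simp [hB, hC, hr0, hrE, Matrix.vecHead, Matrix.vecTail, huniq, hk]
                    try (rcases eq_or_ne i j with rfl | hij
                         · simp
                         · simp [hij, eq_comm])
        have := rank_le_five_of_factor Q B C hfac
        omega
    · -- at most three nonzero d's: rank ≤ 5, contradiction
      exfalso
      have h3 : S.card ≤ 3 := by omega
      have hmcard : 3 ≤ (Finset.univ : Finset (Fin m)).card := by
        simp only [Finset.card_univ, Fintype.card_fin]; omega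
      obtain ⟨T, hST, -, hTcard⟩ :=
        Finset.exists_subsuperset_card_eq (Finset.subset_univ S) h3 hmcard
      set g : Fin 3 → Fin m := fun k => ((T.orderIsoOfFin hTcard) k : Fin m) with hg
      have hginj : Function.Injective g := fun x y hxy =>
        (T.orderIsoOfFin hTcard).injective (Subtype.ext hxy)
      have hgsurj : ∀ i, i ∈ T → ∃ k, g k = i := fun i hi => by
        obtain ⟨k, hk⟩ := (T.orderIsoOfFin hTcard).surjective ⟨i, hi⟩
        exact ⟨k, congrArg Subtype.val hk⟩
      set r0 : Fin (m+1) → ℚ := Fin.cases 1 (fun _ => 0) with hr0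
      set rc : Fin (m+1) → ℚ := Fin.cases 0 (fun j => (c j : ℚ)) with hrc
      set rE : Fin m → Fin (m+1) → ℚ :=
        fun i => Fin.cases 0 (fun j => if i = j then 1 else 0) with hrE
      set C : Matrix (Fin 5) (Fin (m+1)) ℚ :=
        Matrix.of ![r0, rc, rE (g 0), rE (g 1), rE (g 2)] with hC
      set B : Matrix (Fin (m+1)) (Fin 5) ℚ :=
        Matrix.of (Fin.cases
          ![(a : ℚ), 1, 0, 0, 0]
          (fun i => ![(c i : ℚ), h * (c i : ℚ),
            if g 0 = i then d i else 0,
            if g 1 = i then d i else 0,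
            if g 2 = i then d i else 0])) with hB
      have hfac : Q = B * C := by
        ext i j
        rw [Matrix.mul_apply, Fin.sum_univ_five]
        induction i using Fin.cases with
        | zero =>
          induction j using Fin.cases with
          | zero => simp [hB, hC, hr0, hrc, hrE, Matrix.vecHead, Matrix.vecTail, hQ00]
          | succ j =>
            rw [hQrow j]
            simp [hB, hC, hr0, hrc, hrE, Matrix.vecHead, Matrix.vecTail]
        | succ i =>
          induction j using Fin.cases with
          | zero =>
            rw [hQcol i]
            simp [hB, hC, hr0, hrc, hrE, Matrix.vecHead, Matrix.vecTail]
          | succ j =>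
            rw [hQblk i j]
            by_cases hdi : d i = 0
            · simp [hB, hC, hr0, hrc, hrE, Matrix.vecHead, Matrix.vecTail, hdi]
            · obtain ⟨k, hk⟩ := hgsurj i (hST ((hmemS i).mpr hdi))
              have huniq : ∀ k' : Fin 3, g k' = i ↔ k' = k := fun k' =>
                ⟨fun e => hginj (e.trans hk.symm), fun e => e ▸ hk⟩
              fin_cases k <;>
                · simp only [Fin.zero_eta, Fin.reduceFinMk] at huniq hk
                  simp [hB, hC, hr0, hrc, hrE, Matrix.vecHead, Matrix.vecTail, huniq, hk]
                  try ring
      have := rank_le_five_of_factor Q B C hfac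
      omega
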